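/- Let k be a difference field and R a k-σ-algebra. If for all k-linearly independent f₁,…,fₙ ∈ R the elements σ(f₁),…,σ(fₙ) are k-linearly independent, then for every σ-reduced k-σ-algebra S (i.e. σ : S → S injective), the tensor product R ⊗_k S is σ-reduced, where σ acts by σ(r ⊗ s) = σ(r) ⊗ σ(s). -/

import Mathlib

open TensorProduct

/-- The diagonal endomorphism `σ(a ⊗ b) = σ(a) ⊗ σ(b)` of `A ⊗_k B` is injective
(i.e. `A ⊗_k B` is σ-reduced): any ring endomorphism satisfying the defining rule
on pure tensors is injective. -/
def SigmaReducedTensor (k A B : Type) [CommRing k] [CommRing A] [CommRing B]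
    [Algebra k A] [Algebra k B] (σA : A →+* A) (σB : B →+* B) : Prop :=
  ∀ τ : (A ⊗[k] B) →+* A ⊗[k] B,
    (∀ (a : A) (b : B), τ (a ⊗ₜ[k] b) = σA a ⊗ₜ[k] σB b) → Function.Injective τ

/-- A `k`-σ-algebra `R` is σ-separable over `k` if `R ⊗_k K` is σ-reduced for
every difference field extension `K` of `k`. -/
def IsSigmaSeparable (k R : Type) [Field k] [CommRing R] [Algebra k R]
    (σk : k →+* k) (σR : R →+* R) : Prop :=
  ∀ (K : Type) [Field K] [Algebra k K], ∀ σK : K →+* K,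
    (∀ x : k, σK (algebraMap k K x) = algebraMap k K (σk x)) →
    SigmaReducedTensor k K R σK σR

lemma sum_tmul_eq_zero_of_li {k R S : Type} [Field k] [AddCommGroup R] [Module k R]
    [AddCommGroup S] [Module k S] {n : ℕ} {g : Fin n → R}
    (hg : LinearIndependent k g) (t : Fin n → S)
    (h : (∑ j, g j ⊗ₜ[k] t j) = (0 : R ⊗[k] S)) : ∀ i, t i = 0 := by
  classical
  intro i
  set W := Submodule.span k (Set.range g)
  let bW : Module.Basis (Fin n) k W := Module.Basis.span hg
  obtain ⟨φ, hφ⟩ := LinearMap.exists_extend (bW.coord i)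
  have hφg : ∀ j, φ (g j) = if j = i then 1 else 0 := by
    intro j
    have hmem : g j ∈ W := Submodule.subset_span ⟨j, rfl⟩
    have : (⟨g j, hmem⟩ : W) = bW j := (Module.Basis.span_apply hg j).symm
    calc φ (g j) = (φ ∘ₗ W.subtype) ⟨g j, hmem⟩ := rfl
      _ = bW.coord i (bW j) := by rw [hφ, this]
      _ = if j = i then 1 else 0 := by
          rw [bW.coord_apply, bW.repr_self]
          simp [Finsupp.single_apply]
  have := congrArg (fun z => (TensorProduct.lid k S) (LinearMap.rTensor S φ z)) h
  simp only [map_sum, map_zero, LinearMap.rTensor_tmul, TensorProduct.lid_tmul] at this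
  simp only [hφg] at this
  rw [Finset.sum_eq_single i (by intro j _ hj; simp [hj]) (by simp)] at this
  simpa using this


/-- If `σ` preserves `k`-linear independence, then `R ⊗_k S` is σ-reduced for
every σ-reduced `k`-σ-algebra `S`. -/
theorem strongly_etale_stmt1
    (k R : Type) [Field k] [CommRing R] [Algebra k R]
    (σk : k →+* k) (σR : R →+* R)
    (hcomp : ∀ x : k, σR (algebraMap k R x) = algebraMap k R (σk x))
    (hLI : ∀ (n : ℕ) (f : Fin n → R), LinearIndependent k f →
      LinearIndependent k (fun i => σR (f i))) :
    ∀ (S : Type) [CommRing S] [Algebra k S], ∀ σS : S →+* S,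
      (∀ x : k, σS (algebraMap k S x) = algebraMap k S (σk x)) →
      Function.Injective σS →
      SigmaReducedTensor k R S σR σS := by
  intro S _ _ σS hσS hinj τ hτ
  classical
  rw [injective_iff_map_eq_zero]
  intro x hx
  set ι := Module.Basis.ofVectorSpaceIndex k R
  set b : Module.Basis ι k R := Module.Basis.ofVectorSpace k R with hb
  let e : R ⊗[k] S ≃ₗ[k] (ι →₀ S) :=
    (TensorProduct.congr b.repr (LinearEquiv.refl k S)) ≪≫ₗ TensorProduct.finsuppScalarLeft k S ι
  set F : ι →₀ S := e x with hF
  have hsingle : ∀ (i : ι) (s : S), e.symm (Finsupp.single i s) = b i ⊗ₜ[k] s := by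
    intro i s
    simp only [e, LinearEquiv.trans_symm, LinearEquiv.trans_apply,
      TensorProduct.finsuppScalarLeft_symm_apply_single, TensorProduct.congr_symm_tmul,
      LinearEquiv.refl_symm, LinearEquiv.refl_apply, Module.Basis.repr_symm_single_one]
  have hxF : x = ∑ i ∈ F.support, (b i) ⊗ₜ[k] (F i) := by
    have h1 : e.symm F = ∑ i ∈ F.support, (b i) ⊗ₜ[k] (F i) := by
      conv_lhs => rw [← Finsupp.sum_single F]
      rw [Finsupp.sum, map_sum]
      exact Finset.sum_congr rfl (fun i _ => hsingle i (F i))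
    rw [← h1, hF, e.symm_apply_apply]
  -- enumerate the support
  set n := F.support.card
  let q : Fin n ≃ F.support := F.support.equivFin.symm
  have hqinj : Function.Injective (fun j => ((q j : ι))) :=
    Subtype.val_injective.comp q.injective
  let g : Fin n → R := fun j => b (q j)
  let t : Fin n → S := fun j => F (q j)
  have hg : LinearIndependent k g := b.linearIndependent.comp _ hqinj
  have hτx : (∑ j, σR (g j) ⊗ₜ[k] σS (t j)) = 0 := by
    rw [← hx, hxF, map_sum]
    rw [← Finset.sum_coe_sort (s := F.support)]
    rw [← Equiv.sum_comp q (fun i => τ (b (i : ι) ⊗ₜ[k] F (i : ι)))]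
    exact Finset.sum_congr rfl (fun j _ => (hτ _ _).symm)
  have hzero := sum_tmul_eq_zero_of_li (hLI n g hg) (fun j => σS (t j)) hτx
  have htz : ∀ j, t j = 0 := fun j => hinj (by simp only [map_zero]; exact hzero j)
  have hF0 : ∀ i ∈ F.support, F i = 0 := by
    intro i hi
    have := htz (q.symm ⟨i, hi⟩)
    simpa [t] using this
  rw [hxF]
  exact Finset.sum_eq_zero fun i hi => by rw [hF0 i hi, TensorProduct.tmul_zero]
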